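/- Let α be any weak composition. Then the underlying diagram of snow(D(α)) equals the union over all dark clouds (r,c) ∈ dark(α) of the hooks ([r] × {c}) ∪ ({r} × [c]), where [n] = {1,...,n}. -/

import Mathlib

open scoped Classical

noncomputable section

/-- A weak composition: a finitely supported sequence of naturals.  Indices are
thought of as positive integers; index `0` is required to satisfy `α 0 = 0`. -/
abbrev WeakComp := ℕ →₀ ℕ

/-- A weak composition is snowy if its positive entries are pairwise distinct. -/
def Snowy (α : WeakComp) : Prop :=
  ∀ r r', 0 < α r → α r = α r' → r = r'

/-- The key diagram of a weak composition: the left-justified diagram with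
`α r` cells in row `r` (columns `1, …, α r`). -/
def keyDiagram (α : WeakComp) : Finset (ℕ × ℕ) :=
  α.support.biUnion fun r => (Finset.Icc 1 (α r)).image fun c => (r, c)

/-- Largest row index occurring in a diagram. -/
def rowBound (D : Finset (ℕ × ℕ)) : ℕ := (D.image Prod.fst).sup id

/-- One step of the snow-diagram algorithm: in row `r`, mark as a dark cloud the
rightmost cell of `D` whose column contains no dark cloud of `S` yet. -/
def darkStep (D S : Finset (ℕ × ℕ)) (r : ℕ) : Finset (ℕ × ℕ) :=
  let cols := (D.filter fun p => p.1 = r ∧ ∀ q ∈ S, q.2 ≠ p.2).image Prod.snd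
  if h : cols.Nonempty then insert (r, cols.max' h) S else S

/-- Process rows `N, N-1, …, N-k+1` from bottom to top. -/
def darkAux (D : Finset (ℕ × ℕ)) (N : ℕ) : ℕ → Finset (ℕ × ℕ)
  | 0 => ∅
  | k + 1 => darkStep D (darkAux D N k) (N - k)

/-- The dark cloud diagram of a diagram `D`: iterate the rows of `D` from bottom
to top, marking in each row the rightmost cell whose column contains no dark
cloud from a lower row. -/
def dark (D : Finset (ℕ × ℕ)) : Finset (ℕ × ℕ) := darkAux D (rowBound D) (rowBound D)

/-- The underlying diagram of the snow diagram of `D`: the cells of `D` together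
with all (snowflake) positions above a dark cloud in its column. -/
def snow (D : Finset (ℕ × ℕ)) : Finset (ℕ × ℕ) :=
  D ∪ (dark D).biUnion fun p => (Finset.Icc 1 p.1).image fun r => (r, p.2)

/-- `rajcode` of a diagram: the number of cells in row `r` of its snow diagram. -/
def rajcodeD (D : Finset (ℕ × ℕ)) (r : ℕ) : ℕ :=
  ((snow D).filter fun p => p.1 = r).card

/-- `raj` of a diagram: the total number of cells of its snow diagram. -/
def rajD (D : Finset (ℕ × ℕ)) : ℕ := (snow D).card

/-- `rajcode` of a weak composition. -/
def rajcode (α : WeakComp) (r : ℕ) : ℕ := rajcodeD (keyDiagram α) r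

/-- `raj` of a weak composition. -/
def raj (α : WeakComp) : ℕ := rajD (keyDiagram α)

/-- Non-attacking rook diagram: a finite subset of `ℤ_{>0} × ℤ_{>0}` with at
most one cell in each row and at most one cell in each column. -/
def IsRook (R : Finset (ℕ × ℕ)) : Prop :=
  (∀ p ∈ R, 1 ≤ p.1 ∧ 1 ≤ p.2) ∧
    ∀ p ∈ R, ∀ q ∈ R, (p.1 = q.1 ∨ p.2 = q.2) → p = q

/-- The sum `|α|` of the entries of a weak composition. -/
def wsum (α : WeakComp) : ℕ := α.sum fun _ v => v

/-- The number of pairs `(r, r')` with `1 ≤ r < r'` and `α r < α r'`. -/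
def invCount (α : WeakComp) : ℕ :=
  ((Finset.Icc 1 (α.support.sup id) ×ˢ α.support).filter fun p =>
      p.1 < p.2 ∧ α p.1 < α p.2).card

/-- Swap entries `i` and `i+1` of a weak composition. -/
def swapEntries (i : ℕ) (α : WeakComp) : WeakComp :=
  Finsupp.equivMapDomain (Equiv.swap i (i + 1)) α

/-- The Rothe diagram of `w ∈ S_n`, in 1-based coordinates:
`{(r, w(r')) : r < r', w(r) > w(r')}`. -/
def rothe {n : ℕ} (w : Equiv.Perm (Fin n)) : Finset (ℕ × ℕ) :=
  (Finset.univ.filter fun p : Fin n × Fin n => p.1 < p.2 ∧ w p.2 < w p.1).image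
    fun p => ((p.1 : ℕ) + 1, (w p.2 : ℕ) + 1)

/-- Length of the longest increasing subsequence of `w` starting at position `r`
(equivalently, starting with the value `w r`). -/
def LISfrom {n : ℕ} (w : Equiv.Perm (Fin n)) (r : Fin n) : ℕ :=
  Finset.sup (Finset.univ.filter fun s : Finset (Fin n) =>
      r ∈ s ∧ (∀ i ∈ s, r ≤ i) ∧ ∀ i ∈ s, ∀ j ∈ s, i < j → w i < w j)
    Finset.card

/-- Insert `x` into a strictly decreasing row: replace the largest entry `< x`
(returning it as bumped), or append `x` at the end. -/
def insertRow : List ℕ → ℕ → List ℕ × Option ℕ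
  | [], x => ([x], none)
  | a :: t, x =>
      if a < x then (x :: t, some a)
      else (a :: (insertRow t x).1, (insertRow t x).2)

/-- The 1-based value of `w` at 0-based position `i` (0 if out of range). -/
def oneline {n : ℕ} (w : Equiv.Perm (Fin n)) (i : ℕ) : ℕ :=
  if h : i < n then (w ⟨i, h⟩ : ℕ) + 1 else 0

/-- Row one of the Schensted insertion tableau after the first `k` insertions of
the values `w(n), w(n-1), …` (1-based values, inserted from the last position). -/
def rowOneAux {n : ℕ} (w : Equiv.Perm (Fin n)) : ℕ → List ℕ
  | 0 => []
  | k + 1 => (insertRow (rowOneAux w k) (oneline w (n - 1 - k))).1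

/-- The value bumped from row one when the value `w r` is inserted (during the
Schensted insertion of `w(n), …, w(1)` into the empty tableau); `none` if `w r`
is appended at the end of row one. -/
def bumpedFromRowOne {n : ℕ} (w : Equiv.Perm (Fin n)) (r : Fin n) : Option ℕ :=
  (insertRow (rowOneAux w (n - 1 - (r : ℕ))) (oneline w (r : ℕ))).2

/-- Position `i` starts a maximal decreasing run of `u` (in one-line notation). -/
def IsRunStart {n : ℕ} (u : Equiv.Perm (Fin n)) (i : Fin n) : Prop :=
  ∀ j : Fin n, (j : ℕ) + 1 = (i : ℕ) → u j < u i

/-- A fireworks permutation: the initial elements of its maximal decreasing runs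
are increasing. -/
def Fireworks {n : ℕ} (u : Equiv.Perm (Fin n)) : Prop :=
  ∀ i j : Fin n, IsRunStart u i → IsRunStart u j → i < j → u i < u j

/-- An inverse fireworks permutation. -/
def InverseFireworks {n : ℕ} (w : Equiv.Perm (Fin n)) : Prop := Fireworks w⁻¹

/-- The `n`-th Bell number: the number of set partitions (equivalence relations)
of an `n`-element set. -/
def bell (n : ℕ) : ℕ := Nat.card (Setoid (Fin n))

/-- The staircase board `Stair_n = {(r,c) : 1 ≤ r ≤ n-1, 1 ≤ c ≤ n-r}`. -/
def stair (n : ℕ) : Finset (ℕ × ℕ) :=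
  (Finset.Icc 1 n ×ˢ Finset.Icc 1 n).filter fun p => p.1 ≤ n - 1 ∧ p.2 ≤ n - p.1

/-- All cells weakly above a rook of `R` in its column, or weakly to the left of
a rook of `R` in its row. -/
def hooks (R : Finset (ℕ × ℕ)) : Finset (ℕ × ℕ) :=
  R.biUnion fun p =>
    ((Finset.Icc 1 p.1).image fun r => (r, p.2)) ∪
      ((Finset.Icc 1 p.2).image fun c => (p.1, c))

/-- The Northwest number `NW(R)`. -/
def NW (R : Finset (ℕ × ℕ)) : ℕ := (hooks R).card

/-- The Garsia–Remmel statistic: the number of cells of `Stair_n` that are not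
weakly above a rook in its column and not weakly to the left of a rook in its
row. -/
def GRcount (n : ℕ) (R : Finset (ℕ × ℕ)) : ℕ :=
  ((stair n).filter fun q =>
      ¬ ∃ p ∈ R, (p.2 = q.2 ∧ q.1 ≤ p.1) ∨ (p.1 = q.1 ∧ q.2 ≤ p.2)).card

/-- Garsia–Remmel `q`-Stirling numbers of the second kind. -/
def qStirling : ℕ → ℕ → Polynomial ℤ
  | 0, 0 => 1
  | 0, _ + 1 => 0
  | _ + 1, 0 => 0
  | n + 1, k + 1 =>
      Polynomial.X ^ k * qStirling n k +
        (∑ i ∈ Finset.range (k + 1), Polynomial.X ^ i) * qStirling n (k + 1)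

/-- The `q`-Bell polynomial `B_n(q) = Σ_{k=0}^n S_{n,k}(q)`. -/
def qBell (n : ℕ) : Polynomial ℤ := ∑ k ∈ Finset.range (n + 1), qStirling n k

/-- Tail lexicographic order on exponent vectors: `γ < α` iff there is `k` with
`γ k < α k` and `γ j = α j` for all `j > k`. -/
def TailLt (γ α : ℕ →₀ ℕ) : Prop :=
  ∃ k, γ k < α k ∧ ∀ j, k < j → γ j = α j


lemma mem_keyDiagram {α : WeakComp} {p : ℕ × ℕ} :
    p ∈ keyDiagram α ↔ 1 ≤ p.2 ∧ p.2 ≤ α p.1 := by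
  unfold keyDiagram
  simp only [Finset.mem_biUnion, Finset.mem_image, Finset.mem_Icc, Finsupp.mem_support_iff]
  constructor
  · rintro ⟨r, hr, c, ⟨h1, h2⟩, rfl⟩
    exact ⟨h1, h2⟩
  · rintro ⟨h1, h2⟩
    exact ⟨p.1, by omega, p.2, ⟨h1, h2⟩, rfl⟩

lemma subset_darkStep (D S : Finset (ℕ × ℕ)) (r : ℕ) : S ⊆ darkStep D S r := by
  unfold darkStep
  dsimp only
  split
  · exact Finset.subset_insert _ _
  · exact Finset.Subset.refl _

lemma darkAux_mem (D : Finset (ℕ × ℕ)) (hD : ∀ p ∈ D, 1 ≤ p.1) (N : ℕ) :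
    ∀ k, ∀ q ∈ darkAux D N k, q ∈ D ∧ N - k < q.1 := by
  intro k
  induction k with
  | zero => intro q hq; simp [darkAux] at hq
  | succ k ih =>
    intro q hq
    unfold darkAux darkStep at hq
    dsimp only at hq
    split at hq
    case isTrue h =>
      rcases Finset.mem_insert.mp hq with rfl | hq'
      · have hmax := Finset.max'_mem _ h
        simp only [Finset.mem_image, Finset.mem_filter] at hmax
        obtain ⟨x, ⟨hxD, hx1, _⟩, hx2⟩ := hmax
        have hxeq : (N - k,
            Finset.max' _ h) = x := by
          exact Prod.ext hx1.symm hx2.symm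
        rw [hxeq]
        refine ⟨hxD, ?_⟩
        have := hD x hxD
        omega
      · obtain ⟨h1, h2⟩ := ih q hq'
        exact ⟨h1, by omega⟩
    case isFalse h =>
      obtain ⟨h1, h2⟩ := ih q hq
      exact ⟨h1, by omega⟩

lemma darkAux_cover (D : Finset (ℕ × ℕ)) (hD : ∀ p ∈ D, 1 ≤ p.1) (N : ℕ) :
    ∀ k, ∀ p ∈ D, p.1 ≤ N → N - k < p.1 →
      ∃ q ∈ darkAux D N k, (q.2 = p.2 ∧ p.1 ≤ q.1) ∨ (q.1 = p.1 ∧ p.2 ≤ q.2) := by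
  intro k
  induction k with
  | zero => intro p hp h1 h2; omega
  | succ k ih =>
    intro p hp h1 h2
    by_cases hr : N - k < p.1
    · obtain ⟨q, hq, hcov⟩ := ih p hp h1 hr
      exact ⟨q, subset_darkStep D _ _ hq, hcov⟩
    · push_neg at hr
      have hp1 : 1 ≤ p.1 := hD p hp
      have hrk : p.1 = N - k := by omega
      show ∃ q ∈ darkStep D (darkAux D N k) (N - k), _
      by_cases hcol : ∃ q ∈ darkAux D N k, q.2 = p.2
      · obtain ⟨q, hqS, hq2⟩ := hcol
        refine ⟨q, subset_darkStep D _ _ hqS, Or.inl ⟨hq2, ?_⟩⟩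
        have := (darkAux_mem D hD N k q hqS).2
        omega
      · push_neg at hcol
        have hpf : p ∈ D.filter fun x => x.1 = N - k ∧ ∀ q ∈ darkAux D N k, q.2 ≠ x.2 := by
          simp only [Finset.mem_filter]
          exact ⟨hp, hrk, fun q hq => hcol q hq⟩
        have hmem : p.2 ∈ (D.filter fun x => x.1 = N - k ∧
            ∀ q ∈ darkAux D N k, q.2 ≠ x.2).image Prod.snd :=
          Finset.mem_image_of_mem _ hpf
        unfold darkStep
        dsimp only
        rw [dif_pos ⟨p.2, hmem⟩]
        exact ⟨(N - k, _), Finset.mem_insert_self _ _,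
          Or.inr ⟨hrk.symm, Finset.le_max' _ _ hmem⟩⟩

/-- the underlying diagram of `snow(D(α))` is the union of the
hooks `([r] × {c}) ∪ ({r} × [c])` over dark clouds `(r,c)`. -/
theorem snow_eq_biUnion_hooks (α : WeakComp) (h0 : α 0 = 0) :
    snow (keyDiagram α) =
      (dark (keyDiagram α)).biUnion fun p =>
        ((Finset.Icc 1 p.1).image fun r => (r, p.2)) ∪
          ((Finset.Icc 1 p.2).image fun c => (p.1, c)) := by
  set D := keyDiagram α with hDdef
  have hD : ∀ p ∈ D, 1 ≤ p.1 := by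
    intro p hp
    rw [hDdef, mem_keyDiagram] at hp
    by_contra h
    have : p.1 = 0 := by omega
    rw [this, h0] at hp
    omega
  have hdarkD : ∀ q ∈ dark D, q ∈ D := fun q hq =>
    (darkAux_mem D hD (rowBound D) (rowBound D) q hq).1
  apply Finset.Subset.antisymm
  · intro p hp
    rw [snow, Finset.mem_union] at hp
    rcases hp with hp | hp
    · -- p ∈ D: use the covering lemma
      have hle : p.1 ≤ rowBound D := by
        apply Finset.le_sup (f := id) (Finset.mem_image_of_mem Prod.fst hp)
      have h2 : rowBound D - rowBound D < p.1 := by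
        have := hD p hp
        omega
      obtain ⟨q, hq, hcov⟩ := darkAux_cover D hD (rowBound D) (rowBound D) p hp hle h2
      rw [Finset.mem_biUnion]
      refine ⟨q, hq, ?_⟩
      rw [Finset.mem_union]
      rcases hcov with ⟨hc, hr⟩ | ⟨hr, hc⟩
      · left
        simp only [Finset.mem_image, Finset.mem_Icc]
        exact ⟨p.1, ⟨hD p hp, hr⟩, by rw [hc]⟩
      · right
        simp only [Finset.mem_image, Finset.mem_Icc]
        have hp2 : 1 ≤ p.2 := (mem_keyDiagram.mp hp).1
        exact ⟨p.2, ⟨hp2, hc⟩, by rw [hr]⟩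
    · -- p is a snowflake: directly in a vertical arm
      rw [Finset.mem_biUnion] at hp
      obtain ⟨q, hq, hmem⟩ := hp
      rw [Finset.mem_biUnion]
      exact ⟨q, hq, Finset.mem_union_left _ hmem⟩
  · intro p hp
    rw [Finset.mem_biUnion] at hp
    obtain ⟨q, hq, hmem⟩ := hp
    rw [Finset.mem_union] at hmem
    rw [snow, Finset.mem_union]
    rcases hmem with hmem | hmem
    · right
      rw [Finset.mem_biUnion]
      exact ⟨q, hq, hmem⟩
    · -- horizontal arm: contained in the key diagram
      left
      simp only [Finset.mem_image, Finset.mem_Icc] at hmem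
      obtain ⟨c, ⟨hc1, hc2⟩, rfl⟩ := hmem
      have hqD := hdarkD q hq
      rw [hDdef, mem_keyDiagram] at hqD ⊢
      exact ⟨hc1, le_trans hc2 hqD.2⟩

end
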